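/- Let q_1 ≥ ... ≥ q_{k₁} and r_1 ≥ ... ≥ r_{k₂} be nonincreasing sequences of nonnegative reals, and let p_1 ≥ ... ≥ p_{k₁+k₂} be the nonincreasing rearrangement of the concatenation of the two sequences. Suppose C ≥ 0 satisfies: (1/i)·(∑_{j=1}^i q_j) − q_{i+1} ≤ C for all i ∈ {1,...,k₁−1}, (1/i)·(∑_{j=1}^i r_j) − r_{i+1} ≤ C for all i ∈ {1,...,k₂−1}, ∑_{j=1}^{k₁} q_j ≤ k₁·C, and ∑_{j=1}^{k₂} r_j ≤ k₂·C. Then (1/i)·(∑_{j=1}^i p_j) − p_{i+1} ≤ C for all i ∈ {1,...,k₁+k₂−1}. -/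

import Mathlib

/-- Sum over any subset of `[1,k]` of an antitone sequence is at most
the sum of the top `card` terms. -/
lemma subset_sum_le_top (q : ℕ → ℝ) (k : ℕ)
    (hmono : ∀ i j, 1 ≤ i → i ≤ j → j ≤ k → q j ≤ q i)
    (A : Finset ℕ) (hA : A ⊆ Finset.Icc 1 k) :
    ∑ s ∈ A, q s ≤ ∑ j ∈ Finset.Icc 1 A.card, q j := by
  set a := A.card with ha
  set f := A.orderEmbOfFin ha.symm with hf
  have hmem : ∀ i : Fin a, f i ∈ Finset.Icc 1 k := fun i => hA (A.orderEmbOfFin_mem ha.symm i)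
  have key : ∀ n, ∀ h : n < a, n + 1 ≤ f ⟨n, h⟩ := by
    intro n
    induction n with
    | zero =>
      intro h
      have := hmem ⟨0, h⟩
      rw [Finset.mem_Icc] at this
      exact this.1
    | succ n ih =>
      intro h
      have h' : n < a := Nat.lt_of_succ_lt h
      have hlt : f ⟨n, h'⟩ < f ⟨n + 1, h⟩ := f.strictMono (by simp [Fin.lt_def])
      have := ih h'
      omega
  have h1 : ∑ s ∈ A, q s = ∑ i : Fin a, q (f i) := by
    refine (Finset.sum_bij (fun (i : Fin a) _ => f i) (fun i _ => A.orderEmbOfFin_mem ha.symm i)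
      (fun i _ j _ hij => f.injective hij) ?_ (fun i _ => rfl)).symm
    intro x hx
    have : x ∈ Set.range f := by rw [Finset.range_orderEmbOfFin]; exact hx
    obtain ⟨i, hi⟩ := this
    exact ⟨i, Finset.mem_univ i, hi⟩
  have himg : Finset.Icc 1 a = Finset.image (· + 1) (Finset.range a) := by
    ext x
    simp only [Finset.mem_Icc, Finset.mem_image, Finset.mem_range]
    constructor
    · rintro ⟨h1, h2⟩; exact ⟨x - 1, by omega, by omega⟩
    · rintro ⟨y, hy, rfl⟩; omega
  have h2 : ∑ j ∈ Finset.Icc 1 a, q j = ∑ i : Fin a, q (i + 1) := by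
    rw [himg, Finset.sum_image (by intro x _ y _ h; simp only at h; omega), ← Fin.sum_univ_eq_sum_range]
  rw [h1, h2]
  apply Finset.sum_le_sum
  intro i _
  have hm := hmem i
  rw [Finset.mem_Icc] at hm
  exact hmono (i + 1) (f i) (by omega) (key i i.2) hm.2

set_option maxHeartbeats 2000000 in
theorem parallel_composition_balanced (k₁ k₂ : ℕ) (hk₁ : 1 ≤ k₁) (hk₂ : 1 ≤ k₂)
    (q r p : ℕ → ℝ)
    (hq0 : ∀ i ∈ Finset.Icc 1 k₁, 0 ≤ q i)
    (hr0 : ∀ i ∈ Finset.Icc 1 k₂, 0 ≤ r i)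
    (hqmono : ∀ i j, 1 ≤ i → i ≤ j → j ≤ k₁ → q j ≤ q i)
    (hrmono : ∀ i j, 1 ≤ i → i ≤ j → j ≤ k₂ → r j ≤ r i)
    (hpmono : ∀ i j, 1 ≤ i → i ≤ j → j ≤ k₁ + k₂ → p j ≤ p i)
    (σ : ℕ → ℕ)
    (hbij : Set.BijOn σ (Finset.Icc 1 (k₁ + k₂) : Set ℕ) (Finset.Icc 1 (k₁ + k₂) : Set ℕ))
    (hperm : ∀ j ∈ Finset.Icc 1 (k₁ + k₂),
      p j = if σ j ≤ k₁ then q (σ j) else r (σ j - k₁))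
    (C : ℝ) (hC : 0 ≤ C)
    (hbq : ∀ i ∈ Finset.Icc 1 (k₁ - 1),
      (1 / (i : ℝ)) * (∑ j ∈ Finset.Icc 1 i, q j) - q (i + 1) ≤ C)
    (hbr : ∀ i ∈ Finset.Icc 1 (k₂ - 1),
      (1 / (i : ℝ)) * (∑ j ∈ Finset.Icc 1 i, r j) - r (i + 1) ≤ C)
    (hsq : ∑ j ∈ Finset.Icc 1 k₁, q j ≤ (k₁ : ℝ) * C)
    (hsr : ∑ j ∈ Finset.Icc 1 k₂, r j ≤ (k₂ : ℝ) * C) :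
    ∀ i ∈ Finset.Icc 1 (k₁ + k₂ - 1),
      (1 / (i : ℝ)) * (∑ j ∈ Finset.Icc 1 i, p j) - p (i + 1) ≤ C := by
  set N := k₁ + k₂ with hN
  intro i hi
  rw [Finset.mem_Icc] at hi
  obtain ⟨hi1, hi2⟩ := hi
  have hiN : i + 1 ≤ N := by omega
  -- σ maps Icc 1 N to Icc 1 N
  have hmaps : ∀ j ∈ Finset.Icc 1 N, σ j ∈ Finset.Icc 1 N := by
    intro j hj
    have := hbij.mapsTo (by exact_mod_cast hj)
    exact_mod_cast this
  have hsub : Finset.Icc 1 i ⊆ Finset.Icc 1 N := Finset.Icc_subset_Icc_right (by omega)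
  have hinj : Set.InjOn σ (Finset.Icc 1 i : Set ℕ) := by
    intro x hx y hy hxy
    exact hbij.injOn (hsub (by exact_mod_cast hx)) (hsub (by exact_mod_cast hy)) hxy
  set S := (Finset.Icc 1 i).image σ with hSdef
  set A := S.filter (fun s => s ≤ k₁) with hAdef
  set B := S.filter (fun s => ¬ s ≤ k₁) with hBdef
  set B' := B.image (fun s => s - k₁) with hB'def
  -- membership facts
  have hSmem : ∀ s ∈ S, 1 ≤ s ∧ s ≤ N := by
    intro s hs
    rw [hSdef, Finset.mem_image] at hs
    obtain ⟨j, hj, rfl⟩ := hs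
    have := hmaps j (hsub hj)
    rw [Finset.mem_Icc] at this
    exact this
  have hAsub : A ⊆ Finset.Icc 1 k₁ := by
    intro s hs
    rw [hAdef, Finset.mem_filter] at hs
    rw [Finset.mem_Icc]
    exact ⟨(hSmem s hs.1).1, hs.2⟩
  have hBmem : ∀ s ∈ B, k₁ < s ∧ s ≤ N := by
    intro s hs
    rw [hBdef, Finset.mem_filter] at hs
    exact ⟨by omega, (hSmem s hs.1).2⟩
  have hBinj : Set.InjOn (fun s => s - k₁) (B : Set ℕ) := by
    intro x hx y hy hxy
    have h1 := hBmem x (by exact_mod_cast hx)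
    have h2 := hBmem y (by exact_mod_cast hy)
    simp only at hxy
    omega
  have hB'sub : B' ⊆ Finset.Icc 1 k₂ := by
    intro t ht
    rw [hB'def, Finset.mem_image] at ht
    obtain ⟨s, hs, rfl⟩ := ht
    have := hBmem s hs
    rw [Finset.mem_Icc]
    omega
  -- cardinalities
  set a := A.card with hadef
  set b := B'.card with hbdef
  have hScard : S.card = i := by
    rw [hSdef, Finset.card_image_of_injOn hinj, Nat.card_Icc]; omega
  have hBcard : B.card = b := by rw [hbdef, hB'def, Finset.card_image_of_injOn hBinj]
  have hab : a + b = i := by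
    rw [hadef, ← hBcard, hAdef, hBdef, Finset.card_filter_add_card_filter_not, hScard]
  have hak : a ≤ k₁ := by
    calc a ≤ (Finset.Icc 1 k₁).card := Finset.card_le_card hAsub
    _ = k₁ := by rw [Nat.card_Icc]; omega
  have hbk : b ≤ k₂ := by
    calc b ≤ (Finset.Icc 1 k₂).card := Finset.card_le_card hB'sub
    _ = k₂ := by rw [Nat.card_Icc]; omega
  -- sum decomposition
  have hsum : ∑ j ∈ Finset.Icc 1 i, p j = (∑ s ∈ A, q s) + (∑ t ∈ B', r t) := by
    have e1 : ∑ j ∈ Finset.Icc 1 i, p j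
        = ∑ s ∈ S, (if s ≤ k₁ then q s else r (s - k₁)) := by
      rw [hSdef, Finset.sum_image (fun x hx y hy h => hinj (by exact_mod_cast hx) (by exact_mod_cast hy) h)]
      exact Finset.sum_congr rfl fun j hj => hperm j (hsub hj)
    rw [e1, ← Finset.sum_filter_add_sum_filter_not S (fun s => s ≤ k₁)]
    congr 1
    · exact Finset.sum_congr rfl fun s hs => by
        rw [Finset.mem_filter] at hs; rw [if_pos hs.2]
    · rw [hB'def, Finset.sum_image (fun x hx y hy h => hBinj (by exact_mod_cast hx) (by exact_mod_cast hy) h)]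
      exact Finset.sum_congr rfl fun s hs => by
        rw [Finset.mem_filter] at hs; rw [if_neg hs.2]
  -- nonnegativity of p (i+1)
  have hi1mem : (i + 1) ∈ Finset.Icc 1 N := by rw [Finset.mem_Icc]; omega
  have hσi1 := hmaps (i + 1) hi1mem
  rw [Finset.mem_Icc] at hσi1
  have hp0 : 0 ≤ p (i + 1) := by
    rw [hperm (i + 1) hi1mem]
    split_ifs with h
    · exact hq0 _ (Finset.mem_Icc.mpr ⟨hσi1.1, h⟩)
    · exact hr0 _ (Finset.mem_Icc.mpr ⟨by omega, by omega⟩)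
  -- anything not yet taken is ≤ p (i+1)
  have hrem : ∀ t, 1 ≤ t → t ≤ N → t ∉ S →
      (if t ≤ k₁ then q t else r (t - k₁)) ≤ p (i + 1) := by
    intro t ht1 htN htS
    obtain ⟨j, hj, hjt⟩ := hbij.surjOn (show t ∈ (Finset.Icc 1 N : Set ℕ) by
      exact_mod_cast Finset.mem_Icc.mpr ⟨ht1, htN⟩)
    have hjmem : j ∈ Finset.Icc 1 N := by exact_mod_cast hj
    rw [Finset.mem_Icc] at hjmem
    have hjlarge : i + 1 ≤ j := by
      by_contra h
      exact htS (by rw [hSdef, Finset.mem_image]; exact ⟨j, Finset.mem_Icc.mpr ⟨hjmem.1, by omega⟩, hjt⟩)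
    have : p j ≤ p (i + 1) := hpmono (i + 1) j (by omega) hjlarge hjmem.2
    calc (if t ≤ k₁ then q t else r (t - k₁))
        = p j := by rw [hperm j (Finset.mem_Icc.mpr hjmem), hjt]
      _ ≤ p (i + 1) := this
  -- bound on the q block
  have hqb : ∑ j ∈ Finset.Icc 1 a, q j ≤ (a : ℝ) * (C + p (i + 1)) := by
    rcases Nat.eq_zero_or_pos a with h0 | hpos
    · simp [h0]
    rcases eq_or_lt_of_le hak with heq | hlt
    · rw [heq]
      calc ∑ j ∈ Finset.Icc 1 k₁, q j ≤ (k₁ : ℝ) * C := hsq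
        _ ≤ (k₁ : ℝ) * (C + p (i + 1)) := by nlinarith [hp0, Nat.cast_nonneg (α := ℝ) k₁]
    · -- 1 ≤ a < k₁ : use balancedness plus pigeonhole
      have hbal := hbq a (Finset.mem_Icc.mpr ⟨hpos, by omega⟩)
      have hns : ¬ Finset.Icc 1 (a + 1) ⊆ A := fun h =>
        absurd (Finset.card_le_card h) (by rw [Nat.card_Icc]; omega)
      obtain ⟨t, ht, htA⟩ := Finset.not_subset.mp hns
      rw [Finset.mem_Icc] at ht
      have htS : t ∉ S := by
        intro hin
        exact htA (by rw [hAdef, Finset.mem_filter]; exact ⟨hin, by omega⟩)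
      have := hrem t ht.1 (by omega) htS
      rw [if_pos (by omega)] at this
      have hqt : q (a + 1) ≤ q t := hqmono t (a + 1) ht.1 ht.2 (by omega)
      have hqa1 : q (a + 1) ≤ p (i + 1) := le_trans hqt this
      have hapos : (0 : ℝ) < (a : ℝ) := by exact_mod_cast hpos
      rw [sub_le_iff_le_add, one_div, inv_mul_le_iff₀ hapos] at hbal
      calc ∑ j ∈ Finset.Icc 1 a, q j ≤ (a : ℝ) * (C + q (a + 1)) := hbal
        _ ≤ (a : ℝ) * (C + p (i + 1)) := by nlinarith
  -- bound on the r block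
  have hrb : ∑ j ∈ Finset.Icc 1 b, r j ≤ (b : ℝ) * (C + p (i + 1)) := by
    rcases Nat.eq_zero_or_pos b with h0 | hpos
    · simp [h0]
    rcases eq_or_lt_of_le hbk with heq | hlt
    · rw [heq]
      calc ∑ j ∈ Finset.Icc 1 k₂, r j ≤ (k₂ : ℝ) * C := hsr
        _ ≤ (k₂ : ℝ) * (C + p (i + 1)) := by nlinarith [hp0, Nat.cast_nonneg (α := ℝ) k₂]
    · have hbal := hbr b (Finset.mem_Icc.mpr ⟨hpos, by omega⟩)
      have hns : ¬ Finset.Icc 1 (b + 1) ⊆ B' := fun h =>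
        absurd (Finset.card_le_card h) (by rw [Nat.card_Icc]; omega)
      obtain ⟨t, ht, htB⟩ := Finset.not_subset.mp hns
      rw [Finset.mem_Icc] at ht
      have htS : t + k₁ ∉ S := by
        intro hin
        apply htB
        rw [hB'def, Finset.mem_image]
        refine ⟨t + k₁, ?_, by omega⟩
        rw [hBdef, Finset.mem_filter]
        exact ⟨hin, by omega⟩
      have := hrem (t + k₁) (by omega) (by omega) htS
      rw [if_neg (by omega)] at this
      have hteq : t + k₁ - k₁ = t := by omega
      rw [hteq] at this
      have hrt : r (b + 1) ≤ r t := hrmono t (b + 1) ht.1 ht.2 (by omega)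
      have hrb1 : r (b + 1) ≤ p (i + 1) := le_trans hrt this
      have hbpos : (0 : ℝ) < (b : ℝ) := by exact_mod_cast hpos
      rw [sub_le_iff_le_add, one_div, inv_mul_le_iff₀ hbpos] at hbal
      calc ∑ j ∈ Finset.Icc 1 b, r j ≤ (b : ℝ) * (C + r (b + 1)) := hbal
        _ ≤ (b : ℝ) * (C + p (i + 1)) := by nlinarith
  -- combine
  have hAq : ∑ s ∈ A, q s ≤ ∑ j ∈ Finset.Icc 1 a, q j := subset_sum_le_top q k₁ hqmono A hAsub
  have hBr : ∑ t ∈ B', r t ≤ ∑ j ∈ Finset.Icc 1 b, r j := subset_sum_le_top r k₂ hrmono B' hB'sub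
  have htotal : ∑ j ∈ Finset.Icc 1 i, p j ≤ (i : ℝ) * (C + p (i + 1)) := by
    have hcast : ((a : ℝ) + (b : ℝ)) = (i : ℝ) := by exact_mod_cast congrArg Nat.cast hab
    calc ∑ j ∈ Finset.Icc 1 i, p j = (∑ s ∈ A, q s) + (∑ t ∈ B', r t) := hsum
      _ ≤ (a : ℝ) * (C + p (i + 1)) + (b : ℝ) * (C + p (i + 1)) :=
        add_le_add (le_trans hAq hqb) (le_trans hBr hrb)
      _ = ((a : ℝ) + (b : ℝ)) * (C + p (i + 1)) := by ring
      _ = (i : ℝ) * (C + p (i + 1)) := by rw [hcast]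
  have hipos : (0 : ℝ) < (i : ℝ) := by exact_mod_cast hi1
  rw [sub_le_iff_le_add, one_div, inv_mul_le_iff₀ hipos]
  linarith
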